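/- Let Π ⊂ ℝ^d (d ≥ 2, 2 ≤ k ≤ d) be a k-dimensional linear subspace, and consider the paraboloid normal map: for x' ∈ ℝ^{d-1}, the upward normal at (x', |x'|²/2) is parallel to (x', −1). Suppose Π ∩ {x_d = −1} = {(y, 𝐚, −1) : y ∈ ℝ^{k-1}} for some 𝐚 ∈ ℝ^{d-k} and, after rotation, 𝐚 = (0, a) ∈ ℝ^{d-k-1}×ℝ. Then the set N^{-1}(Π) of points of the paraboloid whose normal lies in Π is the k−1 dimensional manifold {(y, 0, a, (|y|²+a²)/2) : y ∈ ℝ^{k-1}}, and for ξ = (y, 0, a, (|y|²+a²)/2) ∈ N^{-1}(Π) one has Π ∩ (T_ξ(N^{-1}(Π)) ⊕ span{N(ξ)})^⊥ = {0}, where T_ξ denotes the tangent space and N(ξ) the unit normal to the paraboloid at ξ. -/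

import Mathlib

open MeasureTheory Real

noncomputable section

/-- Ambient space `ℝ^{n+1}` (so `d = n+1`). -/
abbrev Amb (n : ℕ) := EuclideanSpace ℝ (Fin (n + 1))

/-- Build a vector of `ℝ^{n+1}` from coordinates. -/
def mkVec (n : ℕ) (f : Fin (n + 1) → ℝ) : Amb n := (WithLp.equiv 2 _).symm f

/-- The point `ξ(y) = (y, 0, a, (|y|²+a²)/2)` of the paraboloid, `y ∈ ℝ^{k-1}`. -/
def ptP (n k : ℕ) (a : ℝ) (y : Fin (k - 1) → ℝ) : Amb n :=
  mkVec n fun i =>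
    if h : (i : ℕ) < k - 1 then y ⟨i, h⟩
    else if (i : ℕ) = n - 1 then a
    else if (i : ℕ) = n then (∑ j, (y j) ^ 2 + a ^ 2) / 2
    else 0

/-- The (unnormalized) normal `(p', -1)` of the paraboloid over the first `n` coordinates
of `p`. -/
def nvec (n : ℕ) (p : Amb n) : Amb n :=
  mkVec n fun i => if i = Fin.last n then -1 else p i

/-- The vector `w = (0,…,0,a,-1)` (with `a` in position `d-2 = n-1`). -/
def wVec (n : ℕ) (a : ℝ) : Amb n :=
  mkVec n fun i => if i = Fin.last n then -1 else if (i : ℕ) = n - 1 then a else 0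

/-- The `k`-plane `Π = span{e₁,…,e_{k-1}, w}`. -/
def planePi (n k : ℕ) (h : k - 1 ≤ n + 1) (a : ℝ) : Submodule ℝ (Amb n) :=
  Submodule.span ℝ
    (insert (wVec n a)
      {v | ∃ j : Fin (k - 1), v = EuclideanSpace.single (Fin.castLE h j) (1 : ℝ)})

/-- The tangent space `T_{ξ(y)}(N^{-1}(Π)) = span{𝐲_j = e_j + y_j e_d}`. -/
def tangentT (n k : ℕ) (h : k - 1 ≤ n + 1) (y : Fin (k - 1) → ℝ) : Submodule ℝ (Amb n) :=
  Submodule.span ℝ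
    {v | ∃ j : Fin (k - 1),
      v = EuclideanSpace.single (Fin.castLE h j) (1 : ℝ) +
            y j • EuclideanSpace.single (Fin.last n) (1 : ℝ)}

-- helpers
theorem sumApply {n m : ℕ} (v : Fin m → Amb n) (i : Fin (n+1)) :
    (∑ j, v j) i = ∑ j, v j i :=
  by rw [WithLp.ofLp_sum]; exact Finset.sum_apply i Finset.univ _

theorem sum_single {n k : ℕ} (h : k - 1 ≤ n + 1) (c : Fin (k-1) → ℝ) (i : Fin (n+1)) :
    (∑ j, c j • EuclideanSpace.single (Fin.castLE h j) (1:ℝ)) i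
      = if hi : (i:ℕ) < k - 1 then c ⟨i, hi⟩ else 0 := by
  rw [sumApply]
  have key : ∀ j : Fin (k-1), (c j • EuclideanSpace.single (Fin.castLE h j) (1:ℝ)) i
      = if (i:ℕ) = (j:ℕ) then c j else 0 := by
    intro j
    rw [PiLp.smul_apply, EuclideanSpace.single_apply]
    have : (i = Fin.castLE h j) ↔ ((i:ℕ) = (j:ℕ)) := by rw [Fin.ext_iff]; rfl
    split_ifs with h1 h2 h2 <;> simp_all
  rw [Finset.sum_congr rfl fun j _ => key j]
  split_ifs with hi
  · rw [Finset.sum_eq_single (⟨i, hi⟩ : Fin (k-1))]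
    · simp
    · intro b _ hb
      rw [if_neg]
      intro hc; exact hb (by exact Fin.ext hc.symm)
    · simp
  · apply Finset.sum_eq_zero
    intro j _
    rw [if_neg]
    intro hc; exact hi (hc ▸ j.isLt)

theorem wVec_apply {n : ℕ} (a : ℝ) (i : Fin (n+1)) :
    wVec n a i = if i = Fin.last n then -1 else if (i : ℕ) = n - 1 then a else 0 := rfl

theorem nvec_apply {n : ℕ} (p : Amb n) (i : Fin (n+1)) :
    nvec n p i = if i = Fin.last n then -1 else p i := rfl

theorem ptP_apply {n k : ℕ} (a : ℝ) (y : Fin (k-1) → ℝ) (i : Fin (n+1)) :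
    ptP n k a y i = if h : (i : ℕ) < k - 1 then y ⟨i, h⟩
      else if (i : ℕ) = n - 1 then a
      else if (i : ℕ) = n then ((∑ j, (y j) ^ 2) + a ^ 2) / 2
      else 0 := rfl

theorem last_iff {n : ℕ} (i : Fin (n+1)) : (i = Fin.last n) ↔ (i:ℕ) = n := by
  rw [Fin.ext_iff]; rfl

theorem wVec_eq {n : ℕ} (hn : 2 ≤ n) (a : ℝ) :
    wVec n a = a • EuclideanSpace.single (⟨n-1, by omega⟩ : Fin (n+1)) (1:ℝ)
      - EuclideanSpace.single (Fin.last n) (1:ℝ) := by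
  ext i
  rw [wVec_apply, PiLp.sub_apply, PiLp.smul_apply, EuclideanSpace.single_apply,
    EuclideanSpace.single_apply]
  have h1 : (i = (⟨n-1, by omega⟩ : Fin (n+1))) ↔ (i:ℕ) = n - 1 := by rw [Fin.ext_iff]
  simp only [h1, last_iff]
  split_ifs with a1 a2 a2 <;> first | omega | simp

theorem mem_planePi {n k : ℕ} (hk : 2 ≤ k) (hkn : k ≤ n) (h : k - 1 ≤ n + 1) (a : ℝ)
    (v : Amb n) :
    v ∈ planePi n k h a ↔
      ((∀ i : Fin (n+1), k - 1 ≤ (i:ℕ) → (i:ℕ) < n - 1 → v i = 0) ∧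
        v ⟨n-1, by omega⟩ = -a * v (Fin.last n)) := by
  constructor
  · intro hv
    induction hv using Submodule.span_induction with
    | mem x hx =>
        rcases Set.mem_insert_iff.mp hx with rfl | ⟨j, rfl⟩
        · constructor
          · intro i hi1 hi2
            rw [wVec_apply]
            simp only [last_iff]
            split_ifs <;> first | omega | rfl
          · rw [wVec_apply, wVec_apply]
            simp only [last_iff, Fin.val_last]
            split_ifs <;> first | omega | ring
        · constructor
          · intro i hi1 hi2
            rw [EuclideanSpace.single_apply, if_neg]
            intro hc
            have : (i:ℕ) = (j:ℕ) := by rw [hc]; rfl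
            omega
          · rw [EuclideanSpace.single_apply, EuclideanSpace.single_apply,
              if_neg, if_neg]
            · ring
            · intro hc
              have : (n:ℕ) = (j:ℕ) := by
                have := congrArg Fin.val hc; simpa using this
              omega
            · intro hc
              have : n - 1 = (j:ℕ) := by
                have := congrArg Fin.val hc; simpa using this
              omega
    | zero => constructor <;> simp
    | add x z hx hz ihx ihz =>
        obtain ⟨ih1, ih2⟩ := ihx
        obtain ⟨ih1', ih2'⟩ := ihz
        constructor
        · intro i hi1 hi2
          rw [PiLp.add_apply, ih1 i hi1 hi2, ih1' i hi1 hi2, add_zero]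
        · rw [PiLp.add_apply, PiLp.add_apply, ih2, ih2']; ring
    | smul c x hx ih =>
        obtain ⟨ih1, ih2⟩ := ih
        constructor
        · intro i hi1 hi2
          rw [PiLp.smul_apply, ih1 i hi1 hi2, smul_zero]
        · rw [PiLp.smul_apply, PiLp.smul_apply, ih2]; simp [smul_eq_mul]; ring
  · rintro ⟨h0, hlin⟩
    have hrep : v = (∑ j, v (Fin.castLE h j) • EuclideanSpace.single (Fin.castLE h j) (1:ℝ))
        + (-(v (Fin.last n))) • wVec n a := by
      ext i
      rw [PiLp.add_apply, PiLp.smul_apply, sum_single, wVec_apply]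
      simp only [last_iff]
      by_cases h1 : (i:ℕ) < k - 1
      · rw [dif_pos h1, if_neg (by omega), if_neg (by omega)]
        have : Fin.castLE h ⟨(i:ℕ), h1⟩ = i := Fin.ext rfl
        rw [this]; simp [smul_eq_mul]
      · rw [dif_neg h1]
        by_cases h2 : (i:ℕ) = n
        · rw [if_pos h2, zero_add]
          have : i = Fin.last n := Fin.ext (by simpa using h2)
          rw [this]; simp [smul_eq_mul]
        · rw [if_neg h2]
          by_cases h3 : (i:ℕ) = n - 1
          · rw [if_pos h3, zero_add]
            have : i = (⟨n-1, by omega⟩ : Fin (n+1)) := Fin.ext h3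
            rw [this, hlin]; simp [smul_eq_mul]; ring
          · rw [if_neg h3]
            rw [h0 i (by omega) (by omega)]; simp [smul_eq_mul]
    rw [hrep]
    refine Submodule.add_mem _ (Submodule.sum_mem _ fun j _ => Submodule.smul_mem _ _
      (Submodule.subset_span (Set.mem_insert_iff.mpr (Or.inr ⟨j, rfl⟩))))
      (Submodule.smul_mem _ _ (Submodule.subset_span (Set.mem_insert _ _)))

theorem sum_sq {n k : ℕ} (hk : 2 ≤ k) (hkn : k ≤ n) (h : k - 1 ≤ n + 1) (a : ℝ)
    (p : Amb n) (h0 : ∀ i : Fin (n+1), k - 1 ≤ (i:ℕ) → (i:ℕ) < n - 1 → p i = 0)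
    (ha : p ⟨n-1, by omega⟩ = a) :
    (∑ i, if i = Fin.last n then 0 else (p i)^2)
      = (∑ j, (p (Fin.castLE h j))^2) + a^2 := by
  classical
  set T : Finset (Fin (n+1)) :=
    (Finset.univ.image fun j : Fin (k-1) => Fin.castLE h j) ∪ {(⟨n-1, by omega⟩ : Fin (n+1))}
    with hT
  have hsub : ∑ i ∈ T, (if i = Fin.last n then 0 else (p i)^2)
      = ∑ i, (if i = Fin.last n then 0 else (p i)^2) := by
    apply Finset.sum_subset (Finset.subset_univ T)
    intro x _ hx
    rw [hT] at hx
    simp only [Finset.mem_union, Finset.mem_image, Finset.mem_singleton, Finset.mem_univ,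
      true_and, not_or, not_exists] at hx
    obtain ⟨hx1, hx2⟩ := hx
    by_cases hxl : x = Fin.last n
    · rw [if_pos hxl]
    · rw [if_neg hxl]
      have hxk : ¬ (x:ℕ) < k - 1 := by
        intro hc
        exact hx1 ⟨(x:ℕ), hc⟩ (Fin.ext rfl)
      have hxn1 : (x:ℕ) ≠ n - 1 := fun hc => hx2 (Fin.ext hc)
      have hxn : (x:ℕ) ≠ n := fun hc => hxl (Fin.ext (by simpa using hc))
      rw [h0 x (by omega) (by omega)]
      ring
  have hdisj : Disjoint (Finset.univ.image fun j : Fin (k-1) => Fin.castLE h j)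
      ({(⟨n-1, by omega⟩ : Fin (n+1))} : Finset (Fin (n+1))) := by
    rw [Finset.disjoint_singleton_right]
    simp only [Finset.mem_image, Finset.mem_univ, true_and, not_exists]
    intro j hc
    have : (j:ℕ) = n - 1 := congrArg Fin.val hc
    omega
  rw [← hsub, hT, Finset.sum_union hdisj, Finset.sum_image
    (fun x _ y _ hxy => by exact Fin.castLE_injective h hxy)]
  have h1 : ∀ j : Fin (k-1), (if Fin.castLE h j = Fin.last n then (0:ℝ)
      else (p (Fin.castLE h j))^2) = (p (Fin.castLE h j))^2 := by
    intro j
    rw [if_neg]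
    intro hc
    have : (j:ℕ) = n := congrArg Fin.val hc
    omega
  rw [Finset.sum_congr rfl fun j _ => h1 j, Finset.sum_singleton, if_neg, ha]
  intro hc
  have : n - 1 = n := congrArg Fin.val hc
  omega

theorem nvec_ptP {n k : ℕ} (hk : 2 ≤ k) (hkn : k ≤ n) (h : k - 1 ≤ n + 1) (a : ℝ)
    (y : Fin (k-1) → ℝ) :
    nvec n (ptP n k a y)
      = (∑ j, y j • EuclideanSpace.single (Fin.castLE h j) (1:ℝ)) + wVec n a := by
  ext i
  rw [nvec_apply, PiLp.add_apply, sum_single, wVec_apply, ptP_apply]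
  simp only [last_iff]
  split_ifs <;> first | omega | ring


/-- the set of points of the paraboloid whose normal lies in `Π` is exactly
`{(y,0,a,(|y|²+a²)/2) : y ∈ ℝ^{k-1}}`, and at each such point `ξ` one has
`Π ∩ (T_ξ(N^{-1}(Π)) ⊕ span{N(ξ)})^⊥ = {0}` (transversality). -/
theorem stmt7 (n k : ℕ) (hk : 2 ≤ k) (hkn : k ≤ n) (a : ℝ) :
    ({p : Amb n |
        p (Fin.last n) = (∑ i, if i = Fin.last n then 0 else (p i) ^ 2) / 2 ∧
        nvec n p ∈ planePi n k (by omega) a} =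
      {p : Amb n | ∃ y : Fin (k - 1) → ℝ, p = ptP n k a y}) ∧
    ∀ y : Fin (k - 1) → ℝ,
      planePi n k (by omega) a ⊓
          (tangentT n k (by omega) y ⊔
            Submodule.span ℝ {nvec n (ptP n k a y)})ᗮ = ⊥ := by
  have hcast : k - 1 ≤ n + 1 := by omega
  have hy_apply : ∀ (y : Fin (k-1) → ℝ) (hc : k - 1 ≤ n + 1) (j : Fin (k-1)),
      ptP n k a y (Fin.castLE hc j) = y j := by
    intro y hc j
    rw [ptP_apply, dif_pos (show ((Fin.castLE hc j : Fin (n+1)) : ℕ) < k - 1 from j.isLt)]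
    exact congrArg y (Fin.ext rfl)
  constructor
  · ext p
    simp only [Set.mem_setOf_eq]
    constructor
    · rintro ⟨hpar, hmem⟩
      rw [mem_planePi hk hkn] at hmem
      obtain ⟨h0', hlin'⟩ := hmem
      have h0 : ∀ i : Fin (n+1), k - 1 ≤ (i:ℕ) → (i:ℕ) < n - 1 → p i = 0 := by
        intro i h1 h2
        have hne : ¬ (i = Fin.last n) := by rw [last_iff]; omega
        have := h0' i h1 h2
        rwa [nvec_apply, if_neg hne] at this
      have ha : p ⟨n-1, by omega⟩ = a := by
        have hne : ¬ ((⟨n-1, by omega⟩ : Fin (n+1)) = Fin.last n) := by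
          rw [last_iff]; show ¬ (n - 1 = n); omega
        rw [nvec_apply, nvec_apply, if_neg hne, if_pos rfl] at hlin'
        rw [hlin']; ring
      refine ⟨fun j => p (Fin.castLE hcast j), ?_⟩
      ext i
      rw [ptP_apply]
      by_cases h1 : (i:ℕ) < k - 1
      · rw [dif_pos h1]
        exact congrArg p (Fin.ext rfl)
      · rw [dif_neg h1]
        by_cases h3 : (i:ℕ) = n - 1
        · rw [if_pos h3, ← ha]
          exact congrArg p (Fin.ext h3)
        · rw [if_neg h3]
          by_cases h2 : (i:ℕ) = n
          · rw [if_pos h2]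
            have hil : i = Fin.last n := Fin.ext (by simpa using h2)
            rw [hil, hpar, sum_sq hk hkn hcast a p h0 ha]
          · rw [if_neg h2]
            exact h0 i (by omega) (by omega)
    · rintro ⟨y, rfl⟩
      have h0 : ∀ i : Fin (n+1), k - 1 ≤ (i:ℕ) → (i:ℕ) < n - 1 → ptP n k a y i = 0 := by
        intro i h1 h2
        rw [ptP_apply, dif_neg (by omega), if_neg (by omega), if_neg (by omega)]
      have ha : ptP n k a y ⟨n-1, by omega⟩ = a := by
        rw [ptP_apply, dif_neg (show ¬ (((⟨n-1, by omega⟩ : Fin (n+1)) : ℕ) < k - 1) by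
          show ¬ (n - 1 < k - 1); omega),
          if_pos (show ((⟨n-1, by omega⟩ : Fin (n+1)) : ℕ) = n - 1 from rfl)]
      constructor
      · rw [sum_sq hk hkn hcast a _ h0 ha]
        rw [ptP_apply, dif_neg (show ¬ (((Fin.last n : Fin (n+1)) : ℕ) < k - 1) by
          show ¬ (n < k - 1); omega),
          if_neg (show ¬ (((Fin.last n : Fin (n+1)) : ℕ) = n - 1) by
            show ¬ (n = n - 1); omega),
          if_pos (show ((Fin.last n : Fin (n+1)) : ℕ) = n from rfl)]
        simp only [hy_apply]
      · rw [mem_planePi hk hkn, ← mem_planePi hk hkn (by omega) a,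
          nvec_ptP hk hkn (by omega) a y]
        exact Submodule.add_mem _
          (Submodule.sum_mem _ fun j _ => Submodule.smul_mem _ _
            (Submodule.subset_span (Set.mem_insert_iff.mpr (Or.inr ⟨j, rfl⟩))))
          (Submodule.subset_span (Set.mem_insert _ _))
  · intro y
    rw [eq_bot_iff]
    rintro v hv
    obtain ⟨hv1, hv2⟩ := Submodule.mem_inf.mp hv
    rw [Submodule.mem_bot]
    rw [mem_planePi hk hkn] at hv1
    obtain ⟨h0, hlin⟩ := hv1
    rw [Submodule.mem_orthogonal] at hv2
    have hT : ∀ j : Fin (k-1), v (Fin.castLE hcast j) + y j * v (Fin.last n) = 0 := by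
      intro j
      have hmemgen : (EuclideanSpace.single (Fin.castLE hcast j) (1:ℝ) +
          y j • EuclideanSpace.single (Fin.last n) (1:ℝ)) ∈
          tangentT n k (by omega) y ⊔ Submodule.span ℝ {nvec n (ptP n k a y)} :=
        Submodule.mem_sup_left (Submodule.subset_span ⟨j, rfl⟩)
      have := hv2 _ hmemgen
      rw [inner_add_left, real_inner_smul_left, EuclideanSpace.inner_single_left,
        EuclideanSpace.inner_single_left] at this
      simpa using this
    have hN := hv2 _ (Submodule.mem_sup_right (Submodule.mem_span_singleton_self _))
    rw [nvec_ptP hk hkn hcast a y, wVec_eq (by omega) a, inner_add_left, sum_inner,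
      inner_sub_left, real_inner_smul_left, EuclideanSpace.inner_single_left,
      EuclideanSpace.inner_single_left] at hN
    simp only [real_inner_smul_left, EuclideanSpace.inner_single_left, map_one, one_mul,
      conj_trivial] at hN
    set t := v (Fin.last n) with hts
    have hsum : ∑ j, y j * v (Fin.castLE hcast j) = -((∑ j, (y j)^2) * t) := by
      calc ∑ j, y j * v (Fin.castLE hcast j) = ∑ j, -((y j)^2 * t) :=
            Finset.sum_congr rfl fun j _ => by
              have h1 := hT j
              have h2 : v (Fin.castLE hcast j) = -(y j * t) := by linarith
              rw [h2]; ring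
        _ = -∑ j, (y j)^2 * t := by rw [Finset.sum_neg_distrib]
        _ = -((∑ j, (y j)^2) * t) := by rw [Finset.sum_mul]
    have ht : t = 0 := by
      have hS : (0:ℝ) ≤ ∑ j, (y j)^2 := Finset.sum_nonneg fun j _ => sq_nonneg _
      rw [hsum, hlin] at hN
      have heq : ((∑ j, (y j)^2) + a^2 + 1) * t = 0 := by linear_combination -hN
      rcases mul_eq_zero.mp heq with hc | hc
      · exfalso; nlinarith [sq_nonneg a]
      · exact hc
    ext i
    rw [PiLp.zero_apply]
    by_cases h1 : (i:ℕ) < k - 1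
    · have hieq : i = Fin.castLE hcast ⟨(i:ℕ), h1⟩ := Fin.ext rfl
      have hj := hT ⟨(i:ℕ), h1⟩
      rw [ht, mul_zero, add_zero] at hj
      rw [hieq]; exact hj
    · by_cases h2 : (i:ℕ) = n
      · have hieq : i = Fin.last n := Fin.ext (by simpa using h2)
        rw [hieq]; exact ht
      · by_cases h3 : (i:ℕ) = n - 1
        · have hieq : i = (⟨n-1, by omega⟩ : Fin (n+1)) := Fin.ext h3
          rw [hieq, hlin, ht]; ring
        · exact h0 i (by omega) (by omega)
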